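/- Let (C_β) be a global square sequence with associated function n. For every natural number k, the class {β : β is a singular limit ordinal and n(β) ≥ k} is stationary in the ordinals: it intersects every closed unbounded class of ordinals. -/

import Mathlib

open Set

/-- The order type of a set of ordinals: the unique ordinal `o` such that
`Set.Iio o` is order-isomorphic to `X` (or `0` if no such ordinal exists,
which can only happen for proper-class-sized `X`). -/
noncomputable def otype.{u} (X : Set Ordinal.{u}) : Ordinal.{u} :=
  sInf {o : Ordinal.{u} | Nonempty (Set.Iio o ≃o X)}

/-- A set (or class) of ordinals is closed if it contains the supremum of every
nonempty bounded-above subset of itself. -/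
def IsClosedSet (C : Set Ordinal) : Prop :=
  ∀ s : Set Ordinal, s ⊆ C → s.Nonempty → BddAbove s → sSup s ∈ C

/-- `limPts X` is the class of limit ordinals `γ` with `sup (X ∩ γ) = γ`. -/
def limPts (X : Set Ordinal) : Set Ordinal :=
  {γ | Order.IsSuccLimit γ ∧ sSup (X ∩ Set.Iio γ) = γ}

/-- An ordinal is singular if it is a limit ordinal whose cofinality is smaller
than itself. -/
def IsSing (β : Ordinal) : Prop := Order.IsSuccLimit β ∧ β.cof.ord < β

/-- `X` is a closed unbounded subset of the ordinal `β`. -/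
def IsClubIn (X : Set Ordinal) (β : Ordinal) : Prop :=
  X ⊆ Set.Iio β ∧
    (∀ s : Set Ordinal, s ⊆ X → s.Nonempty → sSup s < β → sSup s ∈ X) ∧
    ∀ η < β, ∃ x ∈ X, η < x

/-- A global square sequence. -/
structure GlobalSquare where
  C : Ordinal → Set Ordinal
  club : ∀ β, IsSing β → IsClubIn (C β) β
  ot_lt : ∀ β, IsSing β → otype (C β) < β
  coh : ∀ β, IsSing β → ∀ γ ∈ limPts (C β), γ < β →
    IsSing γ ∧ C γ = C β ∩ Set.Iio γ

/-- `ν` is the function `n` associated to the global square sequence `S`. -/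
def IsAssocFn (S : GlobalSquare) (ν : Ordinal → ℕ) : Prop :=
  open scoped Classical in
  ∀ β, IsSing β →
    ν β = if IsSing (otype (S.C β)) then ν (otype (S.C β)) + 1 else 0

/-- Iterated cardinal successor: `succIt α k = α⁺...⁺` (`k` times). -/
noncomputable def succIt (α : Cardinal) : ℕ → Cardinal
  | 0 => α
  | k + 1 => Order.succ (succIt α k)

/-- An ordinal which is (the ordinal of) a regular cardinal. -/
def IsRegOrd (α : Ordinal) : Prop := ∃ κ : Cardinal, κ.IsRegular ∧ α = κ.ord

/-- End-extension ordering: `EndExt p q` means `p ≤ q`, i.e. `p` end-extends `q`. -/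
def EndExt (p q : Set Ordinal) : Prop :=
  q ⊆ p ∧ ∀ x ∈ p \ q, ∀ y ∈ q, y < x

/-- The class forcing associated to a square sequence with associated function `ν`
and `k ∈ ℕ`: nonempty closed bounded sets of ordinals all of whose elements are
regular cardinals or singular of `ν`-value at least `k+1`. -/
def Pforcing (ν : Ordinal → ℕ) (k : ℕ) : Set (Set Ordinal) :=
  {p | p.Nonempty ∧ IsClosedSet p ∧ BddAbove p ∧
    ∀ α ∈ p, IsRegOrd α ∨ (IsSing α ∧ k + 1 ≤ ν α)}

section Proof
open Cardinal Ordinal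
universe u


lemma le_iioIso {a b : Ordinal.{u}} (f : Iio a ≃o Iio b) (i : Iio a) : i.1 ≤ (f i).1 := by
  obtain ⟨i, hi⟩ := i
  induction i using Ordinal.induction with
  | h i IH =>
    by_contra hlt
    push_neg at hlt
    have h1 : ((f ⟨i, hi⟩).1) < i := hlt
    have h2 := IH _ h1 (lt_trans h1 hi)
    have h3 : (f ⟨(f ⟨i, hi⟩).1, lt_trans h1 hi⟩) < f ⟨i, hi⟩ := by
      rw [f.lt_iff_lt]
      exact Subtype.mk_lt_mk.2 h1
    exact absurd (lt_of_le_of_lt h2 h3) (lt_irrefl _)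

lemma iio_iso_eq {a b : Ordinal.{u}} (h : Nonempty (Iio a ≃o Iio b)) : a = b := by
  obtain ⟨f⟩ := h
  apply le_antisymm
  · by_contra hab
    push_neg at hab
    have := le_iioIso f ⟨b, hab⟩
    have h2 := (f ⟨b, hab⟩).2
    exact absurd (lt_of_le_of_lt this h2) (lt_irrefl _)
  · by_contra hab
    push_neg at hab
    have := le_iioIso f.symm ⟨a, hab⟩
    have h2 := (f.symm ⟨a, hab⟩).2
    exact absurd (lt_of_le_of_lt this h2) (lt_irrefl _)

lemma otype_eq {X : Set Ordinal.{u}} {o : Ordinal.{u}} (h : Nonempty (Iio o ≃o X)) :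
    otype X = o := by
  have huniq : ∀ b ∈ {o : Ordinal.{u} | Nonempty (Set.Iio o ≃o X)}, b = o := by
    rintro b ⟨g⟩
    obtain ⟨f⟩ := h
    exact iio_iso_eq ⟨g.trans f.symm⟩
  apply le_antisymm
  · exact csInf_le' h
  · exact le_csInf ⟨o, h⟩ (fun b hb => (huniq b hb).ge)

lemma exists_otype_iso {X : Set Ordinal.{u}} (h : BddAbove X) :
    Nonempty (Iio (otype X) ≃o X) := by
  obtain ⟨t, ht⟩ := h
  set A : Set Ordinal.{u} := X ∪ Ici (t + 1) with hAdef
  have hA : ¬ BddAbove A := by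
    rintro ⟨s, hs⟩
    have h1 : max s (t + 1) + 1 ∈ A := Or.inr (mem_Ici.2 (le_trans (le_max_right _ _) (le_of_lt (lt_add_one _))))
    have := hs h1
    have h2 : s < max s (t + 1) + 1 := lt_of_le_of_lt (le_max_left _ _) (lt_add_one _)
    exact absurd (lt_of_lt_of_le h2 this) (lt_irrefl _)
  set f := Ordinal.enumOrd A with hfdef
  have hfmono : StrictMono f := Ordinal.enumOrd_strictMono hA
  have hrange : range f = A := Ordinal.range_enumOrd hA
  have hne : {i : Ordinal.{u} | t + 1 ≤ f i}.Nonempty := by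
    have : (t + 1) ∈ A := Or.inr (mem_Ici.2 le_rfl)
    rw [← hrange] at this
    obtain ⟨j, hj⟩ := this
    exact ⟨j, hj.ge⟩
  set o := sInf {i : Ordinal.{u} | t + 1 ≤ f i} with hodef
  have ho : t + 1 ≤ f o := csInf_mem hne
  have hlt : ∀ i : Iio o, f i.1 ∈ X := by
    rintro ⟨i, hi⟩
    have hnotin : i ∉ {i : Ordinal.{u} | t + 1 ≤ f i} := fun hmem => absurd (csInf_le' hmem) (not_le.2 hi)
    have h2 : f i < t + 1 := not_le.1 hnotin
    have h3 : f i ∈ A := by rw [← hrange]; exact ⟨i, rfl⟩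
    rcases h3 with h3 | h3
    · exact h3
    · exact absurd h2 (not_lt.2 h3)
  set F : Iio o → X := fun i => ⟨f i.1, hlt i⟩ with hFdef
  have hFmono : StrictMono F := fun i j hij => Subtype.mk_lt_mk.2 (hfmono hij)
  have hFsurj : Function.Surjective F := by
    rintro ⟨x, hx⟩
    have hxA : x ∈ A := Or.inl hx
    rw [← hrange] at hxA
    obtain ⟨j, hj⟩ := hxA
    have hjo : j < o := by
      by_contra hjo
      push_neg at hjo
      have : f o ≤ f j := hfmono.monotone hjo
      rw [hj] at this
      have hxt : x ≤ t := ht hx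
      exact absurd (le_trans ho this) (not_le.2 (lt_of_le_of_lt hxt (lt_add_one _)))
    exact ⟨⟨j, hjo⟩, Subtype.ext hj⟩
  have : Nonempty (Iio o ≃o X) := ⟨StrictMono.orderIsoOfSurjective F hFmono hFsurj⟩
  rwa [otype_eq this]

lemma otype_position {m : Ordinal.{u}} {X : Set Ordinal.{u}} (e : Iio m ≃o X) {x : Ordinal.{u}}
    (hx : x ∈ X) : otype (X ∩ Iio x) = (e.symm ⟨x, hx⟩ : Iio m).1 := by
  apply otype_eq
  set σ := e.symm ⟨x, hx⟩ with hσ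
  have key : ∀ i : Iio m, (e i : Ordinal) < x ↔ i < σ := by
    intro i
    constructor
    · intro h
      rw [← e.symm_apply_apply i, hσ]
      exact e.symm.strictMono (Subtype.mk_lt_mk.2 h)
    · intro h
      have : e i < e σ := e.strictMono h
      have h2 : (e σ : Ordinal) = x := by rw [hσ, e.apply_symm_apply]
      rw [← h2]
      exact this
  set F : Iio σ.1 → ↥(X ∩ Iio x) := fun i =>
    ⟨(e ⟨i.1, mem_Iio.2 (lt_trans (mem_Iio.1 i.2) (mem_Iio.1 σ.2))⟩ : Ordinal),
      ⟨(e ⟨i.1, mem_Iio.2 (lt_trans (mem_Iio.1 i.2) (mem_Iio.1 σ.2))⟩).2, (key ⟨i.1, mem_Iio.2 (lt_trans (mem_Iio.1 i.2) (mem_Iio.1 σ.2))⟩).2 (Subtype.mk_lt_mk.2 (mem_Iio.1 i.2))⟩⟩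
    with hFdef
  have hFmono : StrictMono F := by
    intro i j hij
    exact Subtype.mk_lt_mk.2 (e.strictMono (Subtype.mk_lt_mk.2 hij))
  have hFsurj : Function.Surjective F := by
    rintro ⟨y, hyX, hyx⟩
    set a := e.symm ⟨y, hyX⟩ with ha
    have haσ : a < σ := by
      rw [ha, hσ]
      exact e.symm.strictMono (Subtype.mk_lt_mk.2 hyx)
    refine ⟨⟨a.1, Subtype.coe_lt_coe.2 haσ⟩, ?_⟩
    apply Subtype.ext
    show (e ⟨a.1, _⟩ : Ordinal) = y
    have : (⟨a.1, mem_Iio.2 (lt_trans (Subtype.coe_lt_coe.2 haσ) (mem_Iio.1 σ.2))⟩ : Iio m) = a := Subtype.ext rfl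
    rw [this, ha, e.apply_symm_apply]
  exact ⟨StrictMono.orderIsoOfSurjective F hFmono hFsurj⟩

lemma cof_le_family {β : Ordinal.{u}} {ι : Type u} (g : ι → Ordinal.{u})
    (h1 : ∀ i, g i < β) (h2 : ∀ a < β, ∃ i, a ≤ g i) : Ordinal.cof β ≤ #ι := by
  have hlsub : Ordinal.lsub g = β := by
    apply le_antisymm
    · exact Ordinal.lsub_le_iff.2 h1
    · by_contra h
      push_neg at h
      obtain ⟨i, hi⟩ := h2 _ h
      exact absurd (lt_of_le_of_lt hi (Ordinal.lt_lsub g i)) (lt_irrefl _)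
  rw [← hlsub]
  exact Ordinal.cof_lsub_le g

noncomputable def chainSup (A : Set Ordinal.{u}) (c : Cardinal.{u}) : Ordinal.{u} :=
  ⨆ j : c.ord.ToType, Ordinal.enumOrd A ((Ordinal.ToType.mk (o := c.ord)).symm j).1

lemma chainSup_spec {A : Set Ordinal.{u}} (hA : ¬ BddAbove A) {c : Cardinal.{u}}
    (hc : c.IsRegular) :
    (∀ i < c.ord, Ordinal.enumOrd A i < chainSup A c) ∧
    (∀ a < chainSup A c, ∃ i < c.ord, a ≤ Ordinal.enumOrd A i) ∧
    Ordinal.cof (chainSup A c) = c := by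
  set lam := c.ord with hlam
  have hlim : Order.IsSuccLimit lam := Cardinal.isSuccLimit_ord hc.1
  set f := Ordinal.enumOrd A with hfdef
  have hfmono : StrictMono f := Ordinal.enumOrd_strictMono hA
  set g : lam.ToType → Ordinal.{u} := fun j => f ((Ordinal.ToType.mk (o := lam)).symm j).1 with hgdef
  set β := chainSup A c with hβdef
  have hβg : β = ⨆ j, g j := rfl
  have hbdd : BddAbove (range g) := Ordinal.bddAbove_range g
  have hfg : ∀ i (hi : i < lam), f i = g (Ordinal.ToType.mk (o := lam) ⟨i, hi⟩) := by
    intro i hi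
    rw [hgdef]
    simp
  have hle : ∀ i, i < lam → f i ≤ β := by
    intro i hi
    rw [hβg, hfg i hi]
    exact le_ciSup hbdd _
  have h1 : ∀ i < lam, f i < β := by
    intro i hi
    have hsucc : Order.succ i < lam := hlim.succ_lt hi
    exact lt_of_lt_of_le (hfmono (Order.lt_succ i)) (hle _ hsucc)
  have h2 : ∀ a < β, ∃ i < lam, a ≤ f i := by
    intro a ha
    rw [hβg, Ordinal.lt_iSup_iff] at ha
    obtain ⟨j, hj⟩ := ha
    exact ⟨((Ordinal.ToType.mk (o := lam)).symm j).1, ((Ordinal.ToType.mk (o := lam)).symm j).2,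
      le_of_lt hj⟩
  refine ⟨h1, h2, ?_⟩
  apply le_antisymm
  · -- cof β ≤ c
    have := cof_le_family g (fun j => h1 _ ((Ordinal.ToType.mk (o := lam)).symm j).2)
      (fun a ha => by
        obtain ⟨i, hi, hia⟩ := h2 a ha
        exact ⟨Ordinal.ToType.mk (o := lam) ⟨i, hi⟩, by rwa [← hfg i hi]⟩)
    rwa [Cardinal.mk_toType, Cardinal.card_ord] at this
  · -- c ≤ cof β
    obtain ⟨ι, h, hlsub, hcard⟩ := Ordinal.exists_lsub_cof β
    rw [← hcard]
    have hhlt : ∀ i, h i < β := fun i => hlsub ▸ Ordinal.lt_lsub h i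
    have hWne : ∀ i : ι, {w : Ordinal.{u} | w < lam ∧ h i < f w}.Nonempty := by
      intro i
      obtain ⟨w, hw, hww⟩ := h2 (h i) (hhlt i)
      have : Order.succ w < lam := hlim.succ_lt hw
      exact ⟨Order.succ w, this, lt_of_le_of_lt hww (hfmono (Order.lt_succ w))⟩
    set φ : ι → Ordinal.{u} := fun i => sInf {w : Ordinal.{u} | w < lam ∧ h i < f w} with hφdef
    have hφmem : ∀ i, φ i < lam ∧ h i < f (φ i) := fun i => csInf_mem (hWne i)
    have : Ordinal.cof lam ≤ #ι := by
      apply cof_le_family φ (fun i => (hφmem i).1)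
      intro a ha
      have hfa : f a < β := h1 a ha
      have : f a < Ordinal.lsub h := hlsub ▸ hfa
      rw [Ordinal.lt_lsub_iff] at this
      obtain ⟨i, hi⟩ := this
      refine ⟨i, ?_⟩
      have : f a < f (φ i) := lt_of_le_of_lt hi (hφmem i).2
      exact le_of_lt (hfmono.lt_iff_lt.1 this)
    rwa [hlam, hc.cof_eq] at this

lemma exists_chain_set {c : Cardinal.{u}} (hc : c.IsRegular) {μ : Ordinal.{u}}
    (hcμ : c < Ordinal.cof μ) {D : Set Ordinal.{u}}
    (hD : ∀ b < μ, ∃ x ∈ D, b < x ∧ x < μ) {η : Ordinal.{u}} (hη : η < μ) :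
    ∃ β, η < β ∧ c.ord < β ∧ β < μ ∧ Ordinal.cof β = c ∧
      ∀ a < β, ∃ x ∈ D, a < x ∧ x < β := by
  have hlim : Order.IsSuccLimit c.ord := Cardinal.isSuccLimit_ord hc.1
  have hcord : c.ord < μ := lt_of_lt_of_le (Cardinal.ord_lt_ord.2 hcμ) (Ordinal.ord_cof_le μ)
  set η' := max η c.ord with hη'def
  have hη' : η' < μ := max_lt hη hcord
  set A : Set Ordinal.{u} := (D ∩ Ioi η' ∩ Iio μ) ∪ Ici μ with hAdef
  have hA : ¬ BddAbove A := by
    rintro ⟨s, hs⟩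
    have h1 : max s μ + 1 ∈ A := Or.inr (mem_Ici.2 (le_trans (le_max_right _ _) (le_of_lt (lt_add_one _))))
    have := hs h1
    exact absurd (lt_of_lt_of_le (lt_of_le_of_lt (le_max_left s μ) (lt_add_one _)) this) (lt_irrefl _)
  set f := Ordinal.enumOrd A with hfdef
  have hfmono : StrictMono f := Ordinal.enumOrd_strictMono hA
  -- f stays below μ on Iio c.ord
  have claim1 : ∀ i < c.ord, f i < μ := by
    intro i
    induction i using Ordinal.induction with
    | h i IH =>
      intro hi
      set σ := ⨆ j : i.ToType, f ((Ordinal.ToType.mk (o := i)).symm j).1 with hσdef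
      have hσ : σ < μ := by
        apply Ordinal.iSup_lt_ord_lift
        · rw [Cardinal.mk_toType, Cardinal.lift_id]
          exact lt_trans (Cardinal.lt_ord.1 hi) hcμ
        · intro j
          exact IH _ ((Ordinal.ToType.mk (o := i)).symm j).2
            (lt_trans ((Ordinal.ToType.mk (o := i)).symm j).2 hi)
      have hmax : max σ η' < μ := max_lt hσ hη'
      obtain ⟨x, hxD, hxgt, hxμ⟩ := hD _ hmax
      have hxA : x ∈ A := Or.inl ⟨⟨hxD, mem_Ioi.2 (lt_of_le_of_lt (le_max_right _ _) hxgt)⟩,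
        mem_Iio.2 hxμ⟩
      have : f i ≤ x := by
        apply Ordinal.enumOrd_le_of_forall_lt hxA
        intro b hb
        have hfb : f b ≤ σ := by
          have : f b = f ((Ordinal.ToType.mk (o := i)).symm (Ordinal.ToType.mk (o := i) ⟨b, hb⟩)).1 := by
            simp
          rw [this]
          exact le_ciSup (Ordinal.bddAbove_range _) _
        exact lt_of_le_of_lt hfb (lt_of_le_of_lt (le_max_left _ _) hxgt)
      exact lt_of_le_of_lt this hxμ
  have hmemD : ∀ i < c.ord, f i ∈ D ∩ Ioi η' := by
    intro i hi
    have := Ordinal.enumOrd_mem hA i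
    rcases this with h | h
    · exact h.1
    · exact absurd (claim1 i hi) (not_lt.2 h)
  obtain ⟨h1, h2, h3⟩ := chainSup_spec hA hc
  set β := chainSup A c with hβdef
  have hβμ : β < μ := by
    apply Ordinal.iSup_lt_ord_lift
    · rw [Cardinal.mk_toType, Cardinal.card_ord, Cardinal.lift_id]
      exact hcμ
    · intro j
      exact claim1 _ ((Ordinal.ToType.mk (o := c.ord)).symm j).2
  have hf0 : f 0 < β := h1 0 hlim.pos
  have hη'f0 : η' < f 0 := (hmemD 0 hlim.pos).2
  refine ⟨β, lt_of_le_of_lt (le_max_left _ _) (lt_of_lt_of_le hη'f0 hf0.le),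
    lt_of_le_of_lt (le_max_right _ _) (lt_of_lt_of_le hη'f0 hf0.le), hβμ, h3, ?_⟩
  intro a ha
  obtain ⟨i, hi, hai⟩ := h2 a ha
  have hsucc : Order.succ i < c.ord := hlim.succ_lt hi
  refine ⟨f (Order.succ i), (hmemD _ hsucc).1, lt_of_le_of_lt hai (hfmono (Order.lt_succ i)),
    h1 _ hsucc⟩

lemma exists_chain_class {c : Cardinal.{u}} (hc : c.IsRegular) {D : Set Ordinal.{u}}
    (hD : ∀ b, ∃ x ∈ D, b < x) (η : Ordinal.{u}) :
    ∃ β, η < β ∧ c.ord < β ∧ Ordinal.cof β = c ∧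
      ∀ a < β, ∃ x ∈ D, a < x ∧ x < β := by
  have hlim : Order.IsSuccLimit c.ord := Cardinal.isSuccLimit_ord hc.1
  set η' := max η c.ord with hη'def
  set A : Set Ordinal.{u} := D ∩ Ioi η' with hAdef
  have hA : ¬ BddAbove A := by
    rintro ⟨s, hs⟩
    obtain ⟨x, hxD, hx⟩ := hD (max s η')
    have hxA : x ∈ A := ⟨hxD, mem_Ioi.2 (lt_of_le_of_lt (le_max_right _ _) hx)⟩
    exact absurd (lt_of_le_of_lt (le_max_left s η') hx) (not_lt.2 (hs hxA))
  set f := Ordinal.enumOrd A with hfdef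
  have hfmono : StrictMono f := Ordinal.enumOrd_strictMono hA
  have hmemD : ∀ i, f i ∈ D ∩ Ioi η' := fun i => Ordinal.enumOrd_mem hA i
  obtain ⟨h1, h2, h3⟩ := chainSup_spec hA hc
  set β := chainSup A c with hβdef
  have hf0 : f 0 < β := h1 0 hlim.pos
  have hη'f0 : η' < f 0 := (hmemD 0).2
  refine ⟨β, lt_of_le_of_lt (le_max_left _ _) (lt_of_lt_of_le hη'f0 hf0.le),
    lt_of_le_of_lt (le_max_right _ _) (lt_of_lt_of_le hη'f0 hf0.le), h3, ?_⟩
  intro a ha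
  obtain ⟨i, hi, hai⟩ := h2 a ha
  have hsucc : Order.succ i < c.ord := hlim.succ_lt hi
  refine ⟨f (Order.succ i), (hmemD _).1, lt_of_le_of_lt hai (hfmono (Order.lt_succ i)),
    h1 _ hsucc⟩

lemma omega_chain2 {X Y : Set Ordinal.{u}} {β : Ordinal.{u}}
    (hX : ∀ b < β, ∃ x ∈ X, b < x ∧ x < β) (hY : ∀ b < β, ∃ x ∈ Y, b < x ∧ x < β)
    {η : Ordinal.{u}} (hη : η < β) :
    ∃ u v : ℕ → Ordinal.{u}, ∀ n, u n ∈ X ∧ v n ∈ Y ∧ η < u n ∧ u n < v n ∧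
      v n < u (n + 1) ∧ u n < β ∧ v n < β := by
  classical
  have pickX : ∀ b : Ordinal.{u}, b < β → {x : Ordinal.{u} // x ∈ X ∧ b < x ∧ x < β} :=
    fun b hb => ⟨Classical.choose (hX b hb),
      (Classical.choose_spec (hX b hb)).1, (Classical.choose_spec (hX b hb)).2⟩
  have pickY : ∀ b : Ordinal.{u}, b < β → {x : Ordinal.{u} // x ∈ Y ∧ b < x ∧ x < β} :=
    fun b hb => ⟨Classical.choose (hY b hb),
      (Classical.choose_spec (hY b hb)).1, (Classical.choose_spec (hY b hb)).2⟩
  -- pairs (u n, v n) with invariants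
  let T := {p : Ordinal.{u} × Ordinal.{u} //
    p.1 ∈ X ∧ p.2 ∈ Y ∧ η < p.1 ∧ p.1 < p.2 ∧ p.1 < β ∧ p.2 < β}
  let step : T → T := fun q =>
    let a := pickX q.1.2 q.2.2.2.2.2.2
    let b := pickY a.1 a.2.2.2
    ⟨(a.1, b.1), a.2.1, b.2.1, lt_trans q.2.2.2.1 (lt_trans q.2.2.2.2.1 a.2.2.1),
      b.2.2.1, a.2.2.2, b.2.2.2⟩
  let q0 : T :=
    let a := pickX η hη
    let b := pickY a.1 a.2.2.2
    ⟨(a.1, b.1), a.2.1, b.2.1, a.2.2.1, b.2.2.1, a.2.2.2, b.2.2.2⟩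
  let q : ℕ → T := fun n => Nat.rec q0 (fun _ r => step r) n
  refine ⟨fun n => (q n).1.1, fun n => (q n).1.2, fun n => ?_⟩
  obtain ⟨h1, h2, h3, h4, h5, h6⟩ := (q n).2
  refine ⟨h1, h2, h3, h4, ?_, h5, h6⟩
  -- v n < u (n+1)
  show (q n).1.2 < (q (n+1)).1.1
  have : q (n+1) = step (q n) := rfl
  rw [this]
  exact (pickX (q n).1.2 (q n).2.2.2.2.2.2).2.2.1

lemma sup_eq_of_interleaved {u v : ℕ → Ordinal.{u}}
    (huv : ∀ n, u n < v n) (hvu : ∀ n, v n < u (n + 1)) :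
    sSup (range u) = sSup (range v) := by
  have hbu : BddAbove (range u) := Ordinal.bddAbove_range u
  have hbv : BddAbove (range v) := Ordinal.bddAbove_range v
  apply le_antisymm
  · apply csSup_le (range_nonempty u)
    rintro x ⟨n, rfl⟩
    exact le_trans (le_of_lt (huv n)) (le_csSup hbv ⟨n, rfl⟩)
  · apply csSup_le (range_nonempty v)
    rintro x ⟨n, rfl⟩
    exact le_trans (le_of_lt (hvu n)) (le_csSup hbu ⟨n+1, rfl⟩)

lemma isLimit_of_sup_chain {u : ℕ → Ordinal.{u}} (hmono : ∀ n, u n < u (n+1)) {γ : Ordinal.{u}}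
    (hγ : γ = sSup (range u)) (h0 : 0 < u 0) : Order.IsSuccLimit γ := by
  have hbu : BddAbove (range u) := Ordinal.bddAbove_range u
  have hlt : ∀ n, u n < γ := by
    intro n
    exact lt_of_lt_of_le (hmono n) (hγ ▸ le_csSup hbu ⟨n+1, rfl⟩)
  refine Ordinal.isSuccLimit_iff.2 ⟨?_, Order.isSuccPrelimit_of_succ_lt ?_⟩
  · intro h
    exact absurd (h ▸ lt_trans h0 (hlt 0)) (lt_irrefl _)
  · intro a ha
    rw [hγ] at ha
    obtain ⟨x, ⟨n, rfl⟩, hax⟩ := exists_lt_of_lt_csSup (range_nonempty u) ha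
    exact lt_of_le_of_lt (Order.succ_le_of_lt hax) (hlt n)

lemma club_unbounded_in {X : Set Ordinal.{u}} {β : Ordinal.{u}} (hX : IsClubIn X β) :
    ∀ b < β, ∃ x ∈ X, b < x ∧ x < β := by
  intro b hb
  obtain ⟨x, hx, hbx⟩ := hX.2.2 b hb
  exact ⟨x, hx, hbx, hX.1 hx⟩

lemma club_inter {X Y : Set Ordinal.{u}} {β : Ordinal.{u}}
    (hβ : (ℵ₀ : Cardinal.{u}) < Ordinal.cof β)
    (hX : IsClubIn X β) (hY : IsClubIn Y β) : IsClubIn (X ∩ Y) β := by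
  refine ⟨fun x hx => hX.1 hx.1, ?_, ?_⟩
  · intro s hs hsne hslt
    exact ⟨hX.2.1 s (fun x hx => (hs hx).1) hsne hslt, hY.2.1 s (fun x hx => (hs hx).2) hsne hslt⟩
  · intro η hη
    obtain ⟨uu, vv, huv⟩ := omega_chain2 (club_unbounded_in hX) (club_unbounded_in hY) hη
    set γ := sSup (range uu) with hγdef
    have hγv : γ = sSup (range vv) :=
      sup_eq_of_interleaved (fun n => (huv n).2.2.2.1) (fun n => (huv n).2.2.2.2.1)
    have hγβ : γ < β := by
      have : (⨆ n, uu n) < β := by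
        apply Ordinal.iSup_lt_ord_lift
        · simpa using hβ
        · exact fun n => (huv n).2.2.2.2.2.1
      exact this
    have hγX : γ ∈ X := hX.2.1 (range uu) (fun x ⟨n, hn⟩ => hn ▸ (huv n).1)
      (range_nonempty uu) hγβ
    have hγY : γ ∈ Y := by
      rw [hγv]
      exact hY.2.1 (range vv) (fun x ⟨n, hn⟩ => hn ▸ (huv n).2.1)
        (range_nonempty vv) (hγv ▸ hγβ)
    refine ⟨γ, ⟨hγX, hγY⟩, ?_⟩
    exact lt_of_lt_of_le (huv 0).2.2.1 (le_csSup (Ordinal.bddAbove_range uu) ⟨0, rfl⟩)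

lemma limPts_subset {P : Set Ordinal.{u}} {β : Ordinal.{u}} (hP : IsClubIn P β) :
    limPts P ∩ Iio β ⊆ P := by
  rintro γ ⟨⟨hlim, hsup⟩, hγβ⟩
  have hne : (P ∩ Iio γ).Nonempty := by
    by_contra h
    rw [not_nonempty_iff_eq_empty] at h
    rw [h] at hsup
    simp at hsup
    exact hlim.pos.ne' hsup.symm
  have := hP.2.1 (P ∩ Iio γ) (fun x hx => hx.1) hne (by rw [hsup]; exact hγβ)
  rwa [hsup] at this

lemma limPts_mono {P Q : Set Ordinal.{u}} (h : P ⊆ Q) : limPts P ⊆ limPts Q := by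
  rintro γ ⟨hlim, hsup⟩
  refine ⟨hlim, le_antisymm ?_ ?_⟩
  · apply csSup_le
    · obtain ⟨x, hx⟩ : (P ∩ Iio γ).Nonempty := by
        by_contra hc
        rw [not_nonempty_iff_eq_empty] at hc
        rw [hc] at hsup
        simp at hsup
        exact hlim.pos.ne' hsup.symm
      exact ⟨x, h hx.1, hx.2⟩
    · rintro x ⟨_, hx⟩
      exact le_of_lt hx
  · calc γ = sSup (P ∩ Iio γ) := hsup.symm
      _ ≤ sSup (Q ∩ Iio γ) := csSup_le_csSup ⟨γ, fun x hx => le_of_lt hx.2⟩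
          (by
            by_contra hc
            rw [not_nonempty_iff_eq_empty] at hc
            rw [hc] at hsup
            simp at hsup
            exact hlim.pos.ne' hsup.symm)
          (fun x hx => ⟨h hx.1, hx.2⟩)

lemma mem_limPts_of_cofinal {P : Set Ordinal.{u}} {γ : Ordinal.{u}} (hγ0 : γ ≠ 0)
    (hcof : ∀ a < γ, ∃ p ∈ P, a < p ∧ p < γ) : γ ∈ limPts P := by
  have hbdd : BddAbove (P ∩ Iio γ) := ⟨γ, fun x hx => le_of_lt hx.2⟩
  have hlim : Order.IsSuccLimit γ := by
    refine Ordinal.isSuccLimit_iff.2 ⟨?_, Order.isSuccPrelimit_of_succ_lt ?_⟩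
    · exact hγ0
    · intro a ha
      obtain ⟨p, _, hap, hpγ⟩ := hcof a ha
      exact lt_of_le_of_lt (Order.succ_le_of_lt hap) hpγ
  refine ⟨hlim, le_antisymm (csSup_le ?_ (fun x hx => le_of_lt hx.2)) ?_⟩
  · obtain ⟨p, hp, h0p, hpγ⟩ := hcof 0 hlim.pos
    exact ⟨p, hp, hpγ⟩
  · by_contra hc
    push_neg at hc
    obtain ⟨p, hp, hsp, hpγ⟩ := hcof _ hc
    exact absurd (le_csSup hbdd ⟨hp, hpγ⟩) (not_le.2 hsp)

lemma limPts_club {P : Set Ordinal.{u}} {β : Ordinal.{u}}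
    (hβ : (ℵ₀ : Cardinal.{u}) < Ordinal.cof β)
    (hP : IsClubIn P β) : IsClubIn (limPts P ∩ Iio β) β := by
  refine ⟨fun x hx => hx.2, ?_, ?_⟩
  · -- closed
    intro s hs hsne hslt
    set γ := sSup s with hγdef
    refine ⟨?_, mem_Iio.2 hslt⟩
    apply mem_limPts_of_cofinal
    · obtain ⟨x, hx⟩ := hsne
      have : 0 < x := (hs hx).1.1.pos
      intro h0
      have := lt_of_lt_of_le this (le_csSup ⟨β, fun y hy => le_of_lt ((hs hy).2)⟩ hx)
      rw [← hγdef, h0] at this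
      exact absurd this (lt_irrefl _)
    · intro a ha
      obtain ⟨x, hxs, hax⟩ := exists_lt_of_lt_csSup hsne ha
      obtain ⟨⟨hxlim, hxsup⟩, hxβ⟩ := hs hxs
      have hPx : (P ∩ Iio x).Nonempty := by
        by_contra hc
        rw [not_nonempty_iff_eq_empty] at hc
        rw [hc] at hxsup
        simp at hxsup
        exact hxlim.pos.ne' hxsup.symm
      obtain ⟨p, hps, hap⟩ := exists_lt_of_lt_csSup hPx (hxsup ▸ hax)
      exact ⟨p, hps.1, hap, lt_of_lt_of_le hps.2 (le_csSup ⟨β, fun y hy => le_of_lt ((hs hy).2)⟩ hxs)⟩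
  · -- unbounded
    intro η hη
    obtain ⟨uu, vv, huv⟩ := omega_chain2 (club_unbounded_in hP) (club_unbounded_in hP) hη
    set γ := sSup (range uu) with hγdef
    have hγβ : γ < β := by
      have : (⨆ n, uu n) < β := by
        apply Ordinal.iSup_lt_ord_lift
        · simpa using hβ
        · exact fun n => (huv n).2.2.2.2.2.1
      exact this
    have humono : ∀ n, uu n < uu (n+1) := fun n => lt_trans (huv n).2.2.2.1 (huv n).2.2.2.2.1
    have hult : ∀ n, uu n < γ := fun n =>
      lt_of_lt_of_le (humono n) (le_csSup (Ordinal.bddAbove_range uu) ⟨n+1, rfl⟩)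
    refine ⟨γ, ⟨mem_limPts_of_cofinal ?_ ?_, mem_Iio.2 hγβ⟩, ?_⟩
    · intro h0
      have := hult 0
      rw [h0] at this
      exact absurd this (not_lt_of_ge (_root_.zero_le (a := uu 0)))
    · intro a ha
      obtain ⟨x, ⟨n, rfl⟩, hax⟩ := exists_lt_of_lt_csSup (range_nonempty uu) ha
      exact ⟨uu n, (huv n).1, hax, hult n⟩
    · exact lt_of_lt_of_le (huv 0).2.2.1 (le_csSup (Ordinal.bddAbove_range uu) ⟨0, rfl⟩)

lemma cof_eq_of_iso_club {m β : Ordinal.{u}} {X : Set Ordinal.{u}} (e : Iio m ≃o X)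
    (hXβ : X ⊆ Iio β) (hu : ∀ a < β, ∃ x ∈ X, a < x) :
    Ordinal.cof m = Ordinal.cof β := by
  classical
  apply le_antisymm
  · obtain ⟨ι, g, hlsub, hcard⟩ := Ordinal.exists_lsub_cof β
    rw [← hcard]
    have hg : ∀ i, g i < β := fun i => hlsub ▸ Ordinal.lt_lsub g i
    have hx : ∀ i : ι, {x : Ordinal.{u} // x ∈ X ∧ g i < x} := fun i =>
      ⟨Classical.choose (hu _ (hg i)), (Classical.choose_spec (hu _ (hg i))).1,
        (Classical.choose_spec (hu _ (hg i))).2⟩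
    apply cof_le_family (fun i => (e.symm ⟨(hx i).1, (hx i).2.1⟩ : Iio m).1)
      (fun i => (e.symm ⟨(hx i).1, (hx i).2.1⟩).2)
    intro a ha
    have haX : (e ⟨a, ha⟩ : Ordinal) < β := hXβ (e ⟨a, ha⟩).2
    rw [← hlsub, Ordinal.lt_lsub_iff] at haX
    obtain ⟨i, hi⟩ := haX
    refine ⟨i, ?_⟩
    have h2 : (e ⟨a, ha⟩ : Ordinal) < (hx i).1 := lt_of_le_of_lt hi (hx i).2.2
    have h3 : e.symm (e ⟨a, ha⟩) < e.symm ⟨(hx i).1, (hx i).2.1⟩ :=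
      e.symm.strictMono (Subtype.mk_lt_mk.2 h2)
    rw [e.symm_apply_apply] at h3
    exact le_of_lt h3
  · obtain ⟨ι, g, hlsub, hcard⟩ := Ordinal.exists_lsub_cof m
    rw [← hcard]
    have hg : ∀ i, g i < m := fun i => hlsub ▸ Ordinal.lt_lsub g i
    apply cof_le_family (fun i => (e ⟨g i, hg i⟩ : Ordinal))
      (fun i => hXβ (e ⟨g i, hg i⟩).2)
    intro a ha
    obtain ⟨x, hxX, hax⟩ := hu a ha
    have hσ : (e.symm ⟨x, hxX⟩ : Iio m).1 < Ordinal.lsub g :=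
      lt_of_lt_of_eq (e.symm ⟨x, hxX⟩).2 hlsub.symm
    rw [Ordinal.lt_lsub_iff] at hσ
    obtain ⟨i, hi⟩ := hσ
    refine ⟨i, ?_⟩
    have h2 : e.symm ⟨x, hxX⟩ ≤ ⟨g i, hg i⟩ := Subtype.mk_le_mk.2 hi
    have h3 : (⟨x, hxX⟩ : X) ≤ e ⟨g i, hg i⟩ := by
      have := e.monotone h2
      rwa [e.apply_symm_apply] at this
    exact le_of_lt (lt_of_lt_of_le hax h3)

lemma succIt_aleph0_le (k : ℕ) : ℵ₀ ≤ (succIt ℵ₀ k : Cardinal.{u}) := by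
  induction k with
  | zero => exact le_rfl
  | succ k ih => exact le_trans ih (le_of_lt (Order.lt_succ _))

lemma succIt_regular (k : ℕ) : (succIt ℵ₀ k : Cardinal.{u}).IsRegular := by
  cases k with
  | zero => exact Cardinal.isRegular_aleph0
  | succ k => exact Cardinal.isRegular_succ (succIt_aleph0_le k)

lemma succIt_lt (k : ℕ) : (succIt ℵ₀ k : Cardinal.{u}) < succIt ℵ₀ (k+1) := Order.lt_succ _

lemma club_cut {c : Cardinal.{u}} (hc : c.IsRegular) {μ : Ordinal.{u}}
    (hcμ : c < Ordinal.cof μ) {F : Set Ordinal.{u}} (hF : IsClubIn F μ) :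
    ∃ β, β < μ ∧ Ordinal.cof β = c ∧ c.ord < β ∧ β ∈ F ∧ IsClubIn (F ∩ Iio β) β := by
  have hμ0 : (0 : Ordinal.{u}) < μ := by
    rcases eq_zero_or_pos μ with h | h
    · rw [h, Ordinal.cof_zero] at hcμ
      exact absurd hcμ (not_lt.2 (le_of_lt (lt_of_lt_of_le Cardinal.aleph0_pos hc.1)))
    · exact h
  obtain ⟨β, hβ0, hβc, hβμ, hβcof, hβcofinal⟩ :=
    exists_chain_set hc hcμ (club_unbounded_in hF) hμ0
  have hβF : β ∈ F := by
    have hne : (F ∩ Iio β).Nonempty := by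
      obtain ⟨x, hx, _, hxβ⟩ := hβcofinal 0 hβ0
      exact ⟨x, hx, hxβ⟩
    have hsup : sSup (F ∩ Iio β) = β := by
      apply le_antisymm
      · exact csSup_le hne (fun x hx => le_of_lt hx.2)
      · by_contra hcon
        push_neg at hcon
        obtain ⟨x, hxF, hsx, hxβ⟩ := hβcofinal _ hcon
        have hmem : x ∈ F ∩ Iio β := ⟨hxF, mem_Iio.2 hxβ⟩
        exact absurd (le_csSup (⟨β, fun y hy => le_of_lt hy.2⟩ : BddAbove (F ∩ Iio β)) hmem) (not_le.2 hsx)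
    have := hF.2.1 (F ∩ Iio β) (fun x hx => hx.1) hne (by rw [hsup]; exact hβμ)
    rwa [hsup] at this
  refine ⟨β, hβμ, hβcof, hβc, hβF, fun x hx => hx.2, ?_, ?_⟩
  · intro s hs hsne hslt
    exact ⟨hF.2.1 s (fun x hx => (hs hx).1) hsne (lt_trans hslt hβμ), mem_Iio.2 hslt⟩
  · intro a ha
    obtain ⟨x, hxF, hax, hxβ⟩ := hβcofinal a ha
    exact ⟨x, ⟨hxF, hxβ⟩, hax⟩

theorem main_lemma (S : GlobalSquare) (ν : Ordinal.{0} → ℕ) (hν : IsAssocFn S ν) :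
    ∀ (k : ℕ) (μ : Ordinal.{0}), succIt ℵ₀ (k+1) ≤ Ordinal.cof μ →
      ∀ F, IsClubIn F μ → ∃ γ ∈ F, IsSing γ ∧ k ≤ ν γ := by
  intro k
  induction k with
  | zero =>
    intro μ hμ F hF
    have hcμ : (ℵ₀ : Cardinal.{0}) < Ordinal.cof μ :=
      lt_of_lt_of_le (succIt_lt 0) hμ
    obtain ⟨β, hβμ, hβcof, hβc, hβF, _⟩ := club_cut Cardinal.isRegular_aleph0 hcμ hF
    refine ⟨β, hβF, ⟨?_, ?_⟩, Nat.zero_le _⟩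
    · exact Ordinal.aleph0_le_cof.1 (by rw [hβcof])
    · rw [hβcof]
      exact hβc
  | succ k IH =>
    intro μ hμ F hF
    set c : Cardinal.{0} := succIt ℵ₀ (k+1) with hcdef
    have hc : c.IsRegular := succIt_regular (k+1)
    have hcμ : c < Ordinal.cof μ := lt_of_lt_of_le (succIt_lt (k+1)) hμ
    obtain ⟨β, hβμ, hβcof, hβc, hβF, hFβclub⟩ := club_cut hc hcμ hF
    have hβ0 : (ℵ₀ : Cardinal.{0}) < Ordinal.cof β := by
      rw [hβcof]
      exact lt_of_le_of_lt (succIt_aleph0_le k) (succIt_lt k)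
    have hsingβ : IsSing β :=
      ⟨Ordinal.aleph0_le_cof.1 (le_of_lt hβ0), by rw [hβcof]; exact hβc⟩
    have hCβ : IsClubIn (S.C β) β := S.club β hsingβ
    set P : Set Ordinal.{0} := S.C β ∩ (F ∩ Iio β) with hPdef
    have hP : IsClubIn P β := club_inter hβ0 hCβ hFβclub
    set E : Set Ordinal.{0} := limPts P ∩ Iio β with hEdef
    have hE : IsClubIn E β := limPts_club hβ0 hP
    have hEP : E ⊆ P := limPts_subset hP
    have hEC : E ⊆ S.C β := fun x hx => (hEP hx).1
    have hbddC : BddAbove (S.C β) := ⟨β, fun x hx => le_of_lt (hCβ.1 hx)⟩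
    set μ₀ : Ordinal.{0} := otype (S.C β) with hμ₀def
    obtain ⟨e⟩ : Nonempty (Iio μ₀ ≃o ↥(S.C β)) := exists_otype_iso hbddC
    have hcof0 : Ordinal.cof μ₀ = Ordinal.cof β := cof_eq_of_iso_club e hCβ.1 hCβ.2.2
    set G : Set Ordinal.{0} :=
      {σ : Ordinal.{0} | ∃ h : σ < μ₀, ((e ⟨σ, h⟩ : ↥(S.C β)) : Ordinal) ∈ E} with hGdef
    have hG : IsClubIn G μ₀ := by
      refine ⟨fun σ hσ => hσ.1, ?_, ?_⟩
      · -- closed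
        intro s hs hsne hslt
        set σstar := sSup s with hσstar
        set t : Set Ordinal.{0} :=
          {x : Ordinal.{0} | ∃ σ ∈ s, ∃ h : σ < μ₀, ((e ⟨σ, h⟩ : ↥(S.C β)) : Ordinal) = x}
          with htdef
        have htE : t ⊆ E := by
          rintro x ⟨σ, hσs, hh, rfl⟩
          obtain ⟨h', hmem⟩ := hs hσs
          exact hmem
        have htne : t.Nonempty := by
          obtain ⟨σ, hσs⟩ := hsne
          obtain ⟨h', _⟩ := hs hσs
          exact ⟨((e ⟨σ, h'⟩ : ↥(S.C β)) : Ordinal), σ, hσs, h', rfl⟩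
        have hbound : ∀ x ∈ t, x ≤ ((e ⟨σstar, hslt⟩ : ↥(S.C β)) : Ordinal) := by
          rintro x ⟨σ, hσs, hh, rfl⟩
          have : (⟨σ, hh⟩ : Iio μ₀) ≤ ⟨σstar, hslt⟩ :=
            Subtype.mk_le_mk.2 (le_csSup ⟨μ₀, fun y hy => le_of_lt (hs hy).1⟩ hσs)
          exact Subtype.coe_le_coe.2 (e.monotone this)
        have htβ : sSup t < β := by
          apply lt_of_le_of_lt (csSup_le htne hbound)
          exact hCβ.1 (e ⟨σstar, hslt⟩).2
        have hyE : sSup t ∈ E := hE.2.1 t htE htne htβ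
        have hyC : sSup t ∈ S.C β := hEC hyE
        have hkey : e.symm ⟨sSup t, hyC⟩ = (⟨σstar, hslt⟩ : Iio μ₀) := by
          apply le_antisymm
          · have h1 : (⟨sSup t, hyC⟩ : ↥(S.C β)) ≤ e ⟨σstar, hslt⟩ :=
              Subtype.coe_le_coe.1 (csSup_le htne hbound)
            have := e.symm.monotone h1
            rwa [e.symm_apply_apply] at this
          · apply Subtype.mk_le_mk.2
            apply csSup_le hsne
            intro σ hσs
            obtain ⟨hh, _⟩ := hs hσs
            have hxt : ((e ⟨σ, hh⟩ : ↥(S.C β)) : Ordinal) ∈ t := ⟨σ, hσs, hh, rfl⟩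
            have h1 : (e ⟨σ, hh⟩ : ↥(S.C β)) ≤ ⟨sSup t, hyC⟩ :=
              Subtype.coe_le_coe.1 (le_csSup ⟨β, fun y hy => le_of_lt (hCβ.1 (hEC (htE hy)))⟩ hxt)
            have := e.symm.monotone h1
            rwa [e.symm_apply_apply] at this
        refine ⟨hslt, ?_⟩
        have : e ⟨σstar, hslt⟩ = ⟨sSup t, hyC⟩ := by
          rw [← hkey, e.apply_symm_apply]
        rw [this]
        exact hyE
      · -- unbounded
        intro a ha
        have hx : ((e ⟨a, ha⟩ : ↥(S.C β)) : Ordinal) < β := hCβ.1 (e ⟨a, ha⟩).2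
        obtain ⟨γ, hγE, hγgt⟩ := hE.2.2 _ hx
        have hγC : γ ∈ S.C β := hEC hγE
        refine ⟨(e.symm ⟨γ, hγC⟩).1, ⟨(e.symm ⟨γ, hγC⟩).2, ?_⟩, ?_⟩
        · have : (⟨(e.symm ⟨γ, hγC⟩).1, (e.symm ⟨γ, hγC⟩).2⟩ : Iio μ₀) = e.symm ⟨γ, hγC⟩ :=
            Subtype.ext rfl
          rw [this, e.apply_symm_apply]
          exact hγE
        · have h1 : (⟨((e ⟨a, ha⟩ : ↥(S.C β)) : Ordinal), (e ⟨a, ha⟩).2⟩ : ↥(S.C β)) <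
              ⟨γ, hγC⟩ := Subtype.mk_lt_mk.2 hγgt
          have h2 := e.symm.strictMono h1
          have h3 : (⟨((e ⟨a, ha⟩ : ↥(S.C β)) : Ordinal), (e ⟨a, ha⟩).2⟩ : ↥(S.C β)) =
              e ⟨a, ha⟩ := Subtype.ext rfl
          rw [h3, e.symm_apply_apply] at h2
          exact h2
    have hIH := IH μ₀ (by rw [hcof0, hβcof]) G hG
    obtain ⟨σ, hσG, hσsing, hσν⟩ := hIH
    obtain ⟨hσμ₀, hγE⟩ := hσG
    set γ : Ordinal.{0} := ((e ⟨σ, hσμ₀⟩ : ↥(S.C β)) : Ordinal) with hγdef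
    have hγC : γ ∈ S.C β := (e ⟨σ, hσμ₀⟩).2
    have hγβ : γ < β := (hEP hγE).2.2
    have hγE' : γ ∈ limPts P ∩ Iio β := hγE
    have hγlim : γ ∈ limPts (S.C β) :=
      limPts_mono (fun x hx => hx.1) hγE'.1
    obtain ⟨hγsing, hγcoh⟩ := S.coh β hsingβ γ hγlim hγβ
    have hsymm : e.symm ⟨γ, hγC⟩ = (⟨σ, hσμ₀⟩ : Iio μ₀) := by
      have : (⟨γ, hγC⟩ : ↥(S.C β)) = e ⟨σ, hσμ₀⟩ := Subtype.ext rfl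
      rw [this, e.symm_apply_apply]
    have hpos : otype (S.C β ∩ Iio γ) = σ := by
      rw [otype_position e hγC, hsymm]
    have hot : otype (S.C γ) = σ := by
      rw [hγcoh]
      exact hpos
    have hνγ : ν γ = ν σ + 1 := by
      rw [hν γ hγsing, hot, if_pos hσsing]
    refine ⟨γ, (hEP hγE).2.1, hγsing, ?_⟩
    rw [hνγ]
    exact Nat.succ_le_succ hσν

/-- `{β | β singular, n β ≥ k}` is stationary in the ordinals. -/
theorem nu_ge_stationary (S : GlobalSquare) (ν : Ordinal → ℕ)
    (hν : IsAssocFn S ν) (k : ℕ)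
    (C : Set Ordinal) (hclosed : IsClosedSet C) (hub : ∀ η, ∃ x ∈ C, η < x) :
    ∃ β ∈ C, IsSing β ∧ k ≤ ν β := by
  obtain ⟨μ, hμ0, hμc, hμcof, hμcofinal⟩ :=
    exists_chain_class (succIt_regular (k+1)) hub 0
  have hF : IsClubIn (C ∩ Iio μ) μ := by
    refine ⟨fun x hx => hx.2, ?_, ?_⟩
    · intro s hs hsne hslt
      refine ⟨hclosed s (fun x hx => (hs hx).1) hsne ⟨μ, fun x hx => le_of_lt (hs hx).2⟩,
        mem_Iio.2 hslt⟩
    · intro a ha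
      obtain ⟨x, hxC, hax, hxμ⟩ := hμcofinal a ha
      exact ⟨x, ⟨hxC, hxμ⟩, hax⟩
  obtain ⟨γ, hγF, hγsing, hγν⟩ := main_lemma S ν hν k μ (by rw [hμcof]) (C ∩ Iio μ) hF
  exact ⟨γ, hγF.1, hγsing, hγν⟩

end Proof
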